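/- Let p be an odd prime and G = GL₂(F_p). Let St denote the Steinberg representation of G over ℚ̄ (the p-dimensional irreducible constituent of Ind_B^G 1, where B is a Borel subgroup). Then the space of T-invariants St^T is 2-dimensional, where T is the diagonal torus; moreover St^T is the direct sum of the two 1-dimensional spaces St^{B₊} and St^{B₋} of invariants under the upper and lower triangular Borel subgroups. -/

import Mathlib

set_option synthInstance.maxHeartbeats 1000000
set_option maxHeartbeats 1000000
set_option linter.unusedSectionVars false

open Module Matrix

variable (p : ℕ) [Fact p.Prime]

def Bplus : Subgroup (GL (Fin 2) (ZMod p)) where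
  carrier := {g | (g : Matrix (Fin 2) (Fin 2) (ZMod p)) 1 0 = 0}
  one_mem' := by simp [Matrix.one_apply]
  mul_mem' := by
    intro a b ha hb
    simp only [Set.mem_setOf_eq, Units.val_mul, Matrix.mul_apply, Fin.sum_univ_two] at *
    simp [ha, hb]
  inv_mem' := by
    intro a ha
    simp only [Set.mem_setOf_eq] at *
    rw [Matrix.coe_units_inv, Matrix.inv_def]
    simp [Matrix.adjugate_fin_two, ha]

def Bminus : Subgroup (GL (Fin 2) (ZMod p)) where
  carrier := {g | (g : Matrix (Fin 2) (Fin 2) (ZMod p)) 0 1 = 0}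
  one_mem' := by simp [Matrix.one_apply]
  mul_mem' := by
    intro a b ha hb
    simp only [Set.mem_setOf_eq, Units.val_mul, Matrix.mul_apply, Fin.sum_univ_two] at *
    simp [ha, hb]
  inv_mem' := by
    intro a ha
    simp only [Set.mem_setOf_eq] at *
    rw [Matrix.coe_units_inv, Matrix.inv_def]
    simp [Matrix.adjugate_fin_two, ha]

def Tsplit : Subgroup (GL (Fin 2) (ZMod p)) := Bplus p ⊓ Bminus p

/-- The embedding `𝔽_{p²}^× → GL₂(𝔽_p)` given by a choice of an `𝔽_p`-basis `b`
of `𝔽_{p²}` (each `z` acts by multiplication on `𝔽_{p²} ≅ 𝔽_p²`). -/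
noncomputable def torusHom (b : Basis (Fin 2) (ZMod p) (GaloisField p 2)) :
    (GaloisField p 2)ˣ →* GL (Fin 2) (ZMod p) :=
  Units.map (((LinearMap.toMatrixAlgEquiv b).toAlgHom.comp
    (Algebra.lmul (ZMod p) (GaloisField p 2))).toRingHom.toMonoidHom)

/-- The non-split maximal torus `T' ≅ 𝔽_{p²}^×`. -/
noncomputable def Tnonsplit (b : Basis (Fin 2) (ZMod p) (GaloisField p 2)) :
    Subgroup (GL (Fin 2) (ZMod p)) := (torusHom p b).range


namespace StAux

variable {p}

/-- entry of a `GL₂` element -/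
abbrev ent (g : GL (Fin 2) (ZMod p)) (i j : Fin 2) : ZMod p :=
  (g : Matrix (Fin 2) (Fin 2) (ZMod p)) i j

lemma mem_Bplus_iff {g : GL (Fin 2) (ZMod p)} : g ∈ Bplus p ↔ ent g 1 0 = 0 := Iff.rfl

lemma mem_Bminus_iff {g : GL (Fin 2) (ZMod p)} : g ∈ Bminus p ↔ ent g 0 1 = 0 := Iff.rfl

lemma mem_Tsplit_iff {g : GL (Fin 2) (ZMod p)} :
    g ∈ Tsplit p ↔ ent g 1 0 = 0 ∧ ent g 0 1 = 0 := Iff.rfl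

lemma ent_mul (g h : GL (Fin 2) (ZMod p)) (i j : Fin 2) :
    ent (g * h) i j = ent g i 0 * ent h 0 j + ent g i 1 * ent h 1 j := by
  simp [ent, Units.val_mul, Matrix.mul_apply, Fin.sum_univ_two]

lemma det_ne_zero (g : GL (Fin 2) (ZMod p)) :
    (g : Matrix (Fin 2) (Fin 2) (ZMod p)).det ≠ 0 := by
  have := Matrix.isUnits_det_units g
  exact IsUnit.ne_zero this

lemma det_eq (g : GL (Fin 2) (ZMod p)) :
    (g : Matrix (Fin 2) (Fin 2) (ZMod p)).det = ent g 0 0 * ent g 1 1 - ent g 0 1 * ent g 1 0 :=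
  Matrix.det_fin_two _

lemma ent00_ne_zero_of_ent10_eq_zero {g : GL (Fin 2) (ZMod p)} (h : ent g 1 0 = 0) :
    ent g 0 0 ≠ 0 := by
  intro h0
  apply det_ne_zero g
  rw [det_eq, h, h0]; ring

lemma ent11_ne_zero_of_ent10_eq_zero {g : GL (Fin 2) (ZMod p)} (h : ent g 1 0 = 0) :
    ent g 1 1 ≠ 0 := by
  intro h0
  apply det_ne_zero g
  rw [det_eq, h, h0]; ring

lemma ent01_ne_zero_of_ent00_eq_zero {g : GL (Fin 2) (ZMod p)} (h : ent g 0 0 = 0) :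
    ent g 0 1 ≠ 0 := by
  intro h0
  apply det_ne_zero g
  rw [det_eq, h, h0]; ring

/-- The coset criterion: `g⁻¹ * h` is upper triangular iff the first columns of
`g` and `h` are proportional. -/
lemma inv_mul_mem_Bplus_iff (g h : GL (Fin 2) (ZMod p)) :
    g⁻¹ * h ∈ Bplus p ↔ ent g 0 0 * ent h 1 0 = ent h 0 0 * ent g 1 0 := by
  set b := g⁻¹ * h with hb
  have hh : h = g * b := by rw [hb]; group
  have e0 : ent h 0 0 = ent g 0 0 * ent b 0 0 + ent g 0 1 * ent b 1 0 := by
    rw [hh, ent_mul]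
  have e1 : ent h 1 0 = ent g 1 0 * ent b 0 0 + ent g 1 1 * ent b 1 0 := by
    rw [hh, ent_mul]
  rw [mem_Bplus_iff, e0, e1]
  constructor
  · intro hb10; rw [hb10]; ring
  · intro hcross
    have hd : ent b 1 0 * (g : Matrix (Fin 2) (Fin 2) (ZMod p)).det = 0 := by
      rw [det_eq]; linear_combination hcross
    rcases mul_eq_zero.mp hd with h1 | h1
    · exact h1
    · exact absurd h1 (det_ne_zero g)

instance decPredBplus : DecidablePred (· ∈ Bplus p) := fun g =>
  decidable_of_iff (ent g 1 0 = 0) Iff.rfl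

/-- The "projective line" as coset space. -/
abbrev X (p : ℕ) [Fact p.Prime] := GL (Fin 2) (ZMod p) ⧸ Bplus p

/-- slope of the first column of `g` -/
def slope (g : GL (Fin 2) (ZMod p)) : Option (ZMod p) :=
  if ent g 1 0 = 0 then none else some (ent g 0 0 / ent g 1 0)

lemma slope_eq_iff (g h : GL (Fin 2) (ZMod p)) :
    slope g = slope h ↔ ent g 0 0 * ent h 1 0 = ent h 0 0 * ent g 1 0 := by
  unfold slope
  by_cases hg : ent g 1 0 = 0 <;> by_cases hh : ent h 1 0 = 0 <;>
    simp only [hg, hh, if_pos, if_neg, if_true, if_false]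
  · simp [hg, hh]
  · simp only [reduceCtorEq, false_iff]
    intro hc
    rw [mul_zero] at hc
    rcases mul_eq_zero.mp hc with h1 | h1
    · exact ent00_ne_zero_of_ent10_eq_zero hg h1
    · exact hh h1
  · simp only [reduceCtorEq, false_iff]
    intro hc
    rw [mul_zero] at hc
    rcases mul_eq_zero.mp hc.symm with h1 | h1
    · exact ent00_ne_zero_of_ent10_eq_zero hh h1
    · exact hg h1
  · rw [Option.some_inj, div_eq_div_iff hg hh]

/-- slope as a function on the coset space -/
def slopeX : X p → Option (ZMod p) :=
  Quotient.lift slope (by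
    intro a b hab
    have : a⁻¹ * b ∈ Bplus p := QuotientGroup.leftRel_apply.mp hab
    exact (slope_eq_iff a b).mpr ((inv_mul_mem_Bplus_iff a b).mp this))

lemma slopeX_mk (g : GL (Fin 2) (ZMod p)) : slopeX (QuotientGroup.mk g) = slope g := rfl

lemma slopeX_injective : Function.Injective (slopeX (p := p)) := by
  intro x y
  induction x using Quotient.inductionOn'
  induction y using Quotient.inductionOn'
  rename_i a b
  intro hab
  have : slope a = slope b := hab
  refine Quotient.sound' (QuotientGroup.leftRel_apply.mpr ?_)
  exact (inv_mul_mem_Bplus_iff a b).mpr ((slope_eq_iff a b).mp this)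

/-- build `GL₂` elements from matrices with nonzero determinant -/
def mkGL (A : Matrix (Fin 2) (Fin 2) (ZMod p)) (h : A.det ≠ 0) : GL (Fin 2) (ZMod p) :=
  Matrix.GeneralLinearGroup.mkOfDetNeZero A h

@[simp] lemma ent_mkGL (A : Matrix (Fin 2) (Fin 2) (ZMod p)) (h : A.det ≠ 0) (i j : Fin 2) :
    ent (mkGL A h) i j = A i j := rfl

lemma slopeX_surjective : Function.Surjective (slopeX (p := p)) := by
  intro t
  match t with
  | none =>
    exact ⟨QuotientGroup.mk 1, by simp [slopeX_mk, slope, ent, Matrix.one_apply]⟩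
  | some t =>
    have hdet : (!![t, -1; 1, 0] : Matrix (Fin 2) (Fin 2) (ZMod p)).det ≠ 0 := by
      simp [Matrix.det_fin_two_of]
    refine ⟨QuotientGroup.mk (mkGL _ hdet), ?_⟩
    rw [slopeX_mk]
    unfold slope
    simp

/-- the projective line has `p+1` points -/
noncomputable def slopeEquiv : X p ≃ Option (ZMod p) :=
  Equiv.ofBijective _ ⟨slopeX_injective, slopeX_surjective⟩

lemma slopeEquiv_apply (x : X p) : slopeEquiv x = slopeX x := rfl

noncomputable instance : Fintype (X p) := Fintype.ofEquiv _ (slopeEquiv (p := p)).symm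

lemma card_X : Fintype.card (X p) = p + 1 := by
  rw [Fintype.card_congr (slopeEquiv (p := p))]
  simp [ZMod.card]

lemma ent00_ne_zero_of_ent01_eq_zero {g : GL (Fin 2) (ZMod p)} (h : ent g 0 1 = 0) :
    ent g 0 0 ≠ 0 := by
  intro h0
  apply det_ne_zero g
  rw [det_eq, h, h0]; ring

lemma ent11_ne_zero_of_ent01_eq_zero {g : GL (Fin 2) (ZMod p)} (h : ent g 0 1 = 0) :
    ent g 1 1 ≠ 0 := by
  intro h0
  apply det_ne_zero g
  rw [det_eq, h, h0]; ring

lemma slope_none_iff (g : GL (Fin 2) (ZMod p)) : slope g = none ↔ ent g 1 0 = 0 := by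
  unfold slope
  split <;> simp_all

lemma slope_some_zero_iff (g : GL (Fin 2) (ZMod p)) :
    slope g = some 0 ↔ (ent g 1 0 ≠ 0 ∧ ent g 0 0 = 0) := by
  unfold slope
  split
  · simp_all
  · rename_i hne
    simp only [Option.some_inj, div_eq_zero_iff]
    constructor
    · rintro (h | h)
      · exact ⟨hne, h⟩
      · exact absurd h hne
    · rintro ⟨-, h⟩; exact Or.inl h

lemma smul_mk (h g : GL (Fin 2) (ZMod p)) :
    (h • (QuotientGroup.mk g : X p)) = QuotientGroup.mk (h * g) := rfl

lemma slope_mul_none_iff {h : GL (Fin 2) (ZMod p)} (g : GL (Fin 2) (ZMod p))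
    (hB : h ∈ Bplus p) : slope (h * g) = none ↔ slope g = none := by
  rw [slope_none_iff, slope_none_iff, ent_mul, mem_Bplus_iff.mp hB, zero_mul, zero_add]
  have h11 := ent11_ne_zero_of_ent10_eq_zero (mem_Bplus_iff.mp hB)
  constructor
  · intro hh
    rcases mul_eq_zero.mp hh with h1 | h1
    · exact absurd h1 h11
    · exact h1
  · intro hh; rw [hh, mul_zero]

lemma slope_mul_some_zero_iff {h : GL (Fin 2) (ZMod p)} (g : GL (Fin 2) (ZMod p))
    (hB : h ∈ Bminus p) : slope (h * g) = some 0 ↔ slope g = some 0 := by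
  have h01 := mem_Bminus_iff.mp hB
  have h00 := ent00_ne_zero_of_ent01_eq_zero h01
  have h11 := ent11_ne_zero_of_ent01_eq_zero h01
  rw [slope_some_zero_iff, slope_some_zero_iff]
  have e00 : ent (h * g) 0 0 = ent h 0 0 * ent g 0 0 := by
    rw [ent_mul, h01, zero_mul, add_zero]
  have e10 : ent (h * g) 1 0 = ent h 1 0 * ent g 0 0 + ent h 1 1 * ent g 1 0 := ent_mul h g 1 0
  constructor
  · rintro ⟨hne, hz⟩
    have hg00 : ent g 0 0 = 0 := by
      rcases mul_eq_zero.mp (e00 ▸ hz) with h1 | h1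
      · exact absurd h1 h00
      · exact h1
    refine ⟨?_, hg00⟩
    intro hg10
    apply hne
    rw [e10, hg00, hg10, mul_zero, mul_zero, add_zero]
  · rintro ⟨hne, hz⟩
    refine ⟨?_, by rw [e00, hz, mul_zero]⟩
    rw [e10, hz, mul_zero, zero_add]
    exact mul_ne_zero h11 hne

/-- orbit invariant for the torus: 3 classes -/
def phiT : X p → Fin 3 := fun x =>
  if slopeX x = none then 0 else if slopeX x = some 0 then 1 else 2

/-- orbit invariant for `B₊`: 2 classes -/
def phiBp : X p → Fin 2 := fun x => if slopeX x = none then 0 else 1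

/-- orbit invariant for `B₋`: 2 classes -/
def phiBm : X p → Fin 2 := fun x => if slopeX x = some 0 then 0 else 1

lemma phiT_congr {x y : X p} (h1 : slopeX x = none ↔ slopeX y = none)
    (h2 : slopeX x = some 0 ↔ slopeX y = some 0) : phiT x = phiT y := by
  unfold phiT
  by_cases hn : slopeX x = none
  · rw [if_pos hn, if_pos (h1.mp hn)]
  · rw [if_neg hn, if_neg (fun h => hn (h1.mpr h))]
    by_cases hz : slopeX x = some 0
    · rw [if_pos hz, if_pos (h2.mp hz)]
    · rw [if_neg hz, if_neg (fun h => hz (h2.mpr h))]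

lemma phiT_invariant (h : Tsplit p) (x : X p) : phiT ((h : GL (Fin 2) (ZMod p)) • x) = phiT x := by
  induction x using Quotient.inductionOn'
  rename_i g
  have hmem := h.2
  rw [mem_Tsplit_iff] at hmem
  show phiT ((h : GL (Fin 2) (ZMod p)) • (QuotientGroup.mk g : X p)) = _
  rw [smul_mk]
  exact phiT_congr (by rw [slopeX_mk, slopeX_mk]; exact slope_mul_none_iff g hmem.1)
    (by rw [slopeX_mk, slopeX_mk]; exact slope_mul_some_zero_iff g hmem.2)

lemma phiBp_invariant (h : Bplus p) (x : X p) :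
    phiBp ((h : GL (Fin 2) (ZMod p)) • x) = phiBp x := by
  induction x using Quotient.inductionOn'
  rename_i g
  show phiBp ((h : GL (Fin 2) (ZMod p)) • (QuotientGroup.mk g : X p)) = _
  rw [smul_mk]
  unfold phiBp
  rw [slopeX_mk, slopeX_mk]
  have := slope_mul_none_iff (h := (h : GL (Fin 2) (ZMod p))) g h.2
  by_cases hc : slope ((h : GL (Fin 2) (ZMod p)) * g) = none
  · rw [if_pos hc, if_pos (this.mp hc)]
  · rw [if_neg hc, if_neg (fun hh => hc (this.mpr hh))]

lemma phiBm_invariant (h : Bminus p) (x : X p) :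
    phiBm ((h : GL (Fin 2) (ZMod p)) • x) = phiBm x := by
  induction x using Quotient.inductionOn'
  rename_i g
  show phiBm ((h : GL (Fin 2) (ZMod p)) • (QuotientGroup.mk g : X p)) = _
  rw [smul_mk]
  unfold phiBm
  rw [slopeX_mk, slopeX_mk]
  have := slope_mul_some_zero_iff (h := (h : GL (Fin 2) (ZMod p))) g h.2
  by_cases hc : slope ((h : GL (Fin 2) (ZMod p)) * g) = some 0
  · rw [if_pos hc, if_pos (this.mp hc)]
  · rw [if_neg hc, if_neg (fun hh => hc (this.mpr hh))]

lemma orbit_of_cross {H : Subgroup (GL (Fin 2) (ZMod p))} {h : GL (Fin 2) (ZMod p)}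
    (hH : h ∈ H) {g g' : GL (Fin 2) (ZMod p)}
    (hc : ent (h * g) 0 0 * ent g' 1 0 = ent g' 0 0 * ent (h * g) 1 0) :
    ∃ t : H, (t : GL (Fin 2) (ZMod p)) • (QuotientGroup.mk g : X p) = QuotientGroup.mk g' := by
  refine ⟨⟨h, hH⟩, ?_⟩
  show (h • (QuotientGroup.mk g : X p)) = QuotientGroup.mk g'
  rw [smul_mk]
  exact QuotientGroup.eq.mpr ((inv_mul_mem_Bplus_iff (h * g) g').mpr hc)

lemma slope_some_nonzero {g : GL (Fin 2) (ZMod p)} {t : ZMod p} (h : slope g = some t)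
    (ht : t ≠ 0) : ent g 1 0 ≠ 0 ∧ ent g 0 0 ≠ 0 := by
  unfold slope at h
  split at h
  · exact absurd h (by simp)
  · rename_i h10
    refine ⟨h10, ?_⟩
    rw [Option.some_inj] at h
    intro h00
    rw [h00, zero_div] at h
    exact ht h.symm

lemma phiT_full (x y : X p) (hxy : phiT x = phiT y) :
    ∃ t : Tsplit p, (t : GL (Fin 2) (ZMod p)) • x = y := by
  obtain ⟨g, rfl⟩ := QuotientGroup.mk_surjective x
  obtain ⟨g', rfl⟩ := QuotientGroup.mk_surjective y
  unfold phiT at hxy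
  by_cases hn : slopeX (QuotientGroup.mk g : X p) = none
  · rw [if_pos hn] at hxy
    by_cases hn' : slopeX (QuotientGroup.mk g' : X p) = none
    · have : (QuotientGroup.mk g : X p) = QuotientGroup.mk g' :=
        slopeX_injective (by rw [hn, hn'])
      exact ⟨1, by rw [OneMemClass.coe_one, one_smul]; exact this⟩
    · rw [if_neg hn'] at hxy
      by_cases hz' : slopeX (QuotientGroup.mk g' : X p) = some 0 <;>
        simp [hz'] at hxy <;> exact absurd hxy (by decide)
  · rw [if_neg hn] at hxy
    by_cases hz : slopeX (QuotientGroup.mk g : X p) = some 0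
    · rw [if_pos hz] at hxy
      by_cases hn' : slopeX (QuotientGroup.mk g' : X p) = none
      · rw [if_pos hn'] at hxy; exact absurd hxy (by decide)
      · rw [if_neg hn'] at hxy
        by_cases hz' : slopeX (QuotientGroup.mk g' : X p) = some 0
        · have : (QuotientGroup.mk g : X p) = QuotientGroup.mk g' :=
            slopeX_injective (by rw [hz, hz'])
          exact ⟨1, by rw [OneMemClass.coe_one, one_smul]; exact this⟩
        · rw [if_neg hz'] at hxy; exact absurd hxy (by decide)
    · rw [if_neg hz] at hxy
      -- x is in the open class
      by_cases hn' : slopeX (QuotientGroup.mk g' : X p) = none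
      · rw [if_pos hn'] at hxy; exact absurd hxy (by decide)
      by_cases hz' : slopeX (QuotientGroup.mk g' : X p) = some 0
      · rw [if_neg hn', if_pos hz'] at hxy; exact absurd hxy (by decide)
      -- both in open class: construct the torus element
      rw [slopeX_mk] at hn hz hn' hz'
      have hg10 : ent g 1 0 ≠ 0 := fun h => hn ((slope_none_iff g).mpr h)
      have hg00 : ent g 0 0 ≠ 0 := fun h => hz ((slope_some_zero_iff g).mpr ⟨hg10, h⟩)
      have hg'10 : ent g' 1 0 ≠ 0 := fun h => hn' ((slope_none_iff g').mpr h)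
      have hg'00 : ent g' 0 0 ≠ 0 := fun h => hz' ((slope_some_zero_iff g').mpr ⟨hg'10, h⟩)
      have hdet : (!![ent g' 0 0 * ent g 1 0, 0; 0, ent g 0 0 * ent g' 1 0] :
          Matrix (Fin 2) (Fin 2) (ZMod p)).det ≠ 0 := by
        rw [Matrix.det_fin_two_of]
        simp only [mul_zero, zero_mul, sub_zero]
        exact mul_ne_zero (mul_ne_zero hg'00 hg10) (mul_ne_zero hg00 hg'10)
      apply orbit_of_cross (H := Tsplit p) (h := mkGL _ hdet)
      · rw [mem_Tsplit_iff]
        constructor <;> simp [ent_mkGL]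
      · rw [ent_mul, ent_mul]
        simp only [ent_mkGL]
        simp only [Matrix.cons_val', Matrix.cons_val_zero, Matrix.cons_val_one, Matrix.head_cons,
          Matrix.empty_val', Matrix.cons_val_fin_one, Matrix.head_fin_const, Matrix.of_apply]
        ring

lemma phiBp_full (x y : X p) (hxy : phiBp x = phiBp y) :
    ∃ t : Bplus p, (t : GL (Fin 2) (ZMod p)) • x = y := by
  obtain ⟨g, rfl⟩ := QuotientGroup.mk_surjective x
  obtain ⟨g', rfl⟩ := QuotientGroup.mk_surjective y
  unfold phiBp at hxy
  by_cases hn : slopeX (QuotientGroup.mk g : X p) = none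
  · by_cases hn' : slopeX (QuotientGroup.mk g' : X p) = none
    · have : (QuotientGroup.mk g : X p) = QuotientGroup.mk g' :=
        slopeX_injective (by rw [hn, hn'])
      exact ⟨1, by rw [OneMemClass.coe_one, one_smul]; exact this⟩
    · rw [if_pos hn, if_neg hn'] at hxy; exact absurd hxy (by decide)
  · by_cases hn' : slopeX (QuotientGroup.mk g' : X p) = none
    · rw [if_neg hn, if_pos hn'] at hxy; exact absurd hxy (by decide)
    · rw [slopeX_mk] at hn hn'
      have hg10 : ent g 1 0 ≠ 0 := fun h => hn ((slope_none_iff g).mpr h)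
      have hg'10 : ent g' 1 0 ≠ 0 := fun h => hn' ((slope_none_iff g').mpr h)
      have hdet : (!![ent g 1 0 * ent g' 1 0, ent g' 0 0 * ent g 1 0 - ent g 0 0 * ent g' 1 0;
            0, ent g 1 0 * ent g' 1 0] : Matrix (Fin 2) (Fin 2) (ZMod p)).det ≠ 0 := by
        rw [Matrix.det_fin_two_of]
        simp only [mul_zero, sub_zero]
        exact mul_ne_zero (mul_ne_zero hg10 hg'10) (mul_ne_zero hg10 hg'10)
      apply orbit_of_cross (H := Bplus p) (h := mkGL _ hdet)
      · rw [mem_Bplus_iff]; simp [ent_mkGL]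
      · rw [ent_mul, ent_mul]
        simp only [ent_mkGL]
        simp only [Matrix.cons_val', Matrix.cons_val_zero, Matrix.cons_val_one, Matrix.head_cons,
          Matrix.empty_val', Matrix.cons_val_fin_one, Matrix.head_fin_const, Matrix.of_apply]
        ring

lemma phiBm_full (x y : X p) (hxy : phiBm x = phiBm y) :
    ∃ t : Bminus p, (t : GL (Fin 2) (ZMod p)) • x = y := by
  obtain ⟨g, rfl⟩ := QuotientGroup.mk_surjective x
  obtain ⟨g', rfl⟩ := QuotientGroup.mk_surjective y
  unfold phiBm at hxy
  by_cases hz : slopeX (QuotientGroup.mk g : X p) = some 0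
  · by_cases hz' : slopeX (QuotientGroup.mk g' : X p) = some 0
    · have : (QuotientGroup.mk g : X p) = QuotientGroup.mk g' :=
        slopeX_injective (by rw [hz, hz'])
      exact ⟨1, by rw [OneMemClass.coe_one, one_smul]; exact this⟩
    · rw [if_pos hz, if_neg hz'] at hxy; exact absurd hxy (by decide)
  · by_cases hz' : slopeX (QuotientGroup.mk g' : X p) = some 0
    · rw [if_neg hz, if_pos hz'] at hxy; exact absurd hxy (by decide)
    · rw [slopeX_mk] at hz hz'
      have hg00 : ent g 0 0 ≠ 0 := by
        by_cases h10 : ent g 1 0 = 0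
        · exact ent00_ne_zero_of_ent10_eq_zero h10
        · exact fun h => hz ((slope_some_zero_iff g).mpr ⟨h10, h⟩)
      have hg'00 : ent g' 0 0 ≠ 0 := by
        by_cases h10 : ent g' 1 0 = 0
        · exact ent00_ne_zero_of_ent10_eq_zero h10
        · exact fun h => hz' ((slope_some_zero_iff g').mpr ⟨h10, h⟩)
      have hdet : (!![ent g 0 0 * ent g' 0 0, 0;
            ent g 0 0 * ent g' 1 0 - ent g 1 0 * ent g' 0 0, ent g 0 0 * ent g' 0 0] :
            Matrix (Fin 2) (Fin 2) (ZMod p)).det ≠ 0 := by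
        rw [Matrix.det_fin_two_of]
        simp only [zero_mul, sub_zero, mul_zero]
        exact mul_ne_zero (mul_ne_zero hg00 hg'00) (mul_ne_zero hg00 hg'00)
      apply orbit_of_cross (H := Bminus p) (h := mkGL _ hdet)
      · rw [mem_Bminus_iff]; simp [ent_mkGL]
      · rw [ent_mul, ent_mul]
        simp only [ent_mkGL]
        simp only [Matrix.cons_val', Matrix.cons_val_zero, Matrix.cons_val_one, Matrix.head_cons,
          Matrix.empty_val', Matrix.cons_val_fin_one, Matrix.head_fin_const, Matrix.of_apply]
        ring

/-- reference points in the three classes -/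
lemma exists_slope_none : ∃ x : X p, slopeX x = none :=
  ⟨QuotientGroup.mk 1, by rw [slopeX_mk]; exact (slope_none_iff 1).mpr (by simp [ent, Matrix.one_apply])⟩

lemma exists_slope_zero : ∃ x : X p, slopeX x = some 0 := by
  have hdet : (!![0, -1; 1, 0] : Matrix (Fin 2) (Fin 2) (ZMod p)).det ≠ 0 := by
    rw [Matrix.det_fin_two_of]; simp
  refine ⟨QuotientGroup.mk (mkGL _ hdet), ?_⟩
  rw [slopeX_mk]
  apply (slope_some_zero_iff _).mpr
  constructor <;> simp [ent_mkGL]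

lemma exists_slope_one : ∃ x : X p, slopeX x = some 1 := by
  have hdet : (!![1, -1; 1, 0] : Matrix (Fin 2) (Fin 2) (ZMod p)).det ≠ 0 := by
    rw [Matrix.det_fin_two_of]; simp
  refine ⟨QuotientGroup.mk (mkGL _ hdet), ?_⟩
  rw [slopeX_mk]
  unfold slope
  simp [ent_mkGL]

lemma phiT_surjective : Function.Surjective (phiT (p := p)) := by
  intro i
  fin_cases i
  · obtain ⟨x, hx⟩ := exists_slope_none (p := p)
    exact ⟨x, by unfold phiT; rw [if_pos hx]; rfl⟩
  · obtain ⟨x, hx⟩ := exists_slope_zero (p := p)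
    refine ⟨x, ?_⟩
    unfold phiT
    rw [if_neg (by rw [hx]; simp), if_pos hx]; rfl
  · obtain ⟨x, hx⟩ := exists_slope_one (p := p)
    refine ⟨x, ?_⟩
    unfold phiT
    rw [if_neg (by rw [hx]; simp), if_neg (by rw [hx]; simp)]; rfl

lemma phiBp_surjective : Function.Surjective (phiBp (p := p)) := by
  intro i
  fin_cases i
  · obtain ⟨x, hx⟩ := exists_slope_none (p := p)
    exact ⟨x, by unfold phiBp; rw [if_pos hx]; rfl⟩
  · obtain ⟨x, hx⟩ := exists_slope_zero (p := p)
    exact ⟨x, by unfold phiBp; rw [if_neg (by rw [hx]; simp)]; rfl⟩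

lemma phiBm_surjective : Function.Surjective (phiBm (p := p)) := by
  intro i
  fin_cases i
  · obtain ⟨x, hx⟩ := exists_slope_zero (p := p)
    exact ⟨x, by unfold phiBm; rw [if_pos hx]; rfl⟩
  · obtain ⟨x, hx⟩ := exists_slope_none (p := p)
    exact ⟨x, by unfold phiBm; rw [if_neg (by rw [hx]; simp)]; rfl⟩

lemma mem_sup_of_ent11 (g : GL (Fin 2) (ZMod p)) (h11 : ent g 1 1 ≠ 0) :
    g ∈ Bplus p ⊔ Bminus p := by
  have du : (!![1, ent g 0 1 / ent g 1 1; 0, 1] : Matrix (Fin 2) (Fin 2) (ZMod p)).det ≠ 0 := by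
    rw [Matrix.det_fin_two_of]; simp
  have dl : (!![ent g 0 0 - ent g 0 1 * ent g 1 0 / ent g 1 1, 0;
      ent g 1 0, ent g 1 1] : Matrix (Fin 2) (Fin 2) (ZMod p)).det ≠ 0 := by
    rw [Matrix.det_fin_two_of]
    have : (ent g 0 0 - ent g 0 1 * ent g 1 0 / ent g 1 1) * ent g 1 1 - 0 * ent g 1 0
        = (g : Matrix (Fin 2) (Fin 2) (ZMod p)).det := by
      rw [det_eq]; field_simp; ring
    rw [this]
    exact det_ne_zero g
  have hg : g = mkGL _ du * mkGL _ dl := by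
    apply Matrix.GeneralLinearGroup.ext
    intro i j
    have : ((mkGL _ du * mkGL _ dl : GL (Fin 2) (ZMod p)) :
        Matrix (Fin 2) (Fin 2) (ZMod p)) i j = ent (mkGL _ du * mkGL _ dl) i j := rfl
    rw [this, ent_mul]
    simp only [ent_mkGL]
    fin_cases i <;> fin_cases j <;>
      simp only [Fin.zero_eta, Fin.mk_one, Matrix.cons_val', Matrix.cons_val_zero, Matrix.cons_val_one, Matrix.head_cons,
        Matrix.empty_val', Matrix.cons_val_fin_one, Matrix.head_fin_const, Matrix.of_apply] <;>
      field_simp <;> try ring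
  rw [hg]
  refine mul_mem (Subgroup.mem_sup_left ?_) (Subgroup.mem_sup_right ?_)
  · rw [mem_Bplus_iff]; simp [ent_mkGL]
  · rw [mem_Bminus_iff]; simp [ent_mkGL]

lemma sup_borels : Bplus p ⊔ Bminus p = (⊤ : Subgroup (GL (Fin 2) (ZMod p))) := by
  rw [Subgroup.eq_top_iff']
  intro g
  by_cases h11 : ent g 1 1 ≠ 0
  · exact mem_sup_of_ent11 g h11
  push_neg at h11
  have de : (!![1, 1; 0, 1] : Matrix (Fin 2) (Fin 2) (ZMod p)).det ≠ 0 := by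
    rw [Matrix.det_fin_two_of]; simp
  set E : GL (Fin 2) (ZMod p) := mkGL _ de with hE
  have h10 : ent g 1 0 ≠ 0 := by
    intro h10
    apply det_ne_zero g
    rw [det_eq, h10, h11]; ring
  have hgE : ent (g * E) 1 1 ≠ 0 := by
    rw [ent_mul]
    have e1 : ent E 0 1 = 1 := rfl
    have e2 : ent E 1 1 = 1 := rfl
    rw [e1, e2, h11, mul_one, mul_one, add_zero]
    exact h10
  have hg : g = (g * E) * E⁻¹ := by group
  rw [hg]
  refine mul_mem (mem_sup_of_ent11 _ hgE) (Subgroup.mem_sup_left (inv_mem ?_))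
  rw [mem_Bplus_iff]
  simp [hE, ent_mkGL]

section RepTools

variable {k : Type} [Field k] {G : Type} [Group G] {V : Type} [AddCommGroup V] [Module k V]

/-- A subspace stable under an irreducible representation is trivial. -/
lemma stable_eq_bot_or_top (ρ : Representation k G V)
    (hirr : IsSimpleModule (MonoidAlgebra k G) ρ.asModule)
    (U : Submodule k V) (hU : ∀ g : G, ∀ x ∈ U, ρ g x ∈ U) : U = ⊥ ∨ U = ⊤ := by
  have key : ∀ r : MonoidAlgebra k G, ∀ x ∈ U, ρ.asAlgebraHom r x ∈ U := by
    intro r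
    induction r using MonoidAlgebra.induction_linear with
    | zero => intro x hx; simp only [map_zero, LinearMap.zero_apply]; exact U.zero_mem
    | add f g hf hg =>
      intro x hx
      rw [map_add, LinearMap.add_apply]
      exact U.add_mem (hf x hx) (hg x hx)
    | single g r =>
      intro x hx
      rw [Representation.asAlgebraHom_single, LinearMap.smul_apply]
      exact U.smul_mem r (hU g x hx)
  let M : Submodule (MonoidAlgebra k G) ρ.asModule :=
    { carrier := (U : Set V)
      add_mem' := fun ha hb => U.add_mem ha hb
      zero_mem' := U.zero_mem
      smul_mem' := by
        intro r x hx
        have hrx : r • x = ρ.asAlgebraHom r x := rfl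
        show r • x ∈ (U : Set V)
        rw [hrx]
        exact key r x hx }
  rcases hirr.1.2 M with hM | hM
  · left
    rw [Submodule.eq_bot_iff]
    intro x hx
    have : x ∈ M := hx
    rw [hM] at this
    exact this
  · right
    rw [Submodule.eq_top_iff']
    intro x
    have : x ∈ M := by rw [hM]; trivial
    exact this

/-- An irreducible representation on a space of dimension at least 2 has no invariants. -/
lemma invariants_eq_bot_of_irreducible [FiniteDimensional k V] (ρ : Representation k G V)
    (hirr : IsSimpleModule (MonoidAlgebra k G) ρ.asModule)
    (hdim : 2 ≤ finrank k V) : Representation.invariants ρ = ⊥ := by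
  rcases stable_eq_bot_or_top ρ hirr (Representation.invariants ρ)
      (fun g x hx => by rw [hx g]; exact hx) with h | h
  · exact h
  · exfalso
    -- the representation is trivial; any line violates simplicity
    have htriv : ∀ (g : G) (x : V), ρ g x = x := by
      intro g x
      have : x ∈ Representation.invariants ρ := by rw [h]; trivial
      exact this g
    have : Nontrivial V := Module.nontrivial_of_finrank_pos (R := k) (by omega)
    obtain ⟨x, hx⟩ := exists_ne (0 : V)
    rcases stable_eq_bot_or_top ρ hirr (k ∙ x)
        (fun g y hy => by rw [htriv g y]; exact hy) with h' | h'
    · have : x ∈ (k ∙ x) := Submodule.mem_span_singleton_self x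
      rw [h'] at this
      exact hx this
    · have h1 : finrank k V = 1 := by
        rw [← finrank_top k V, ← h']
        exact finrank_span_singleton hx
      omega

end RepTools

section Main

variable {k : Type} [Field k] [CharZero k]
variable {V : Type} [AddCommGroup V] [Module k V] [FiniteDimensional k V]
variable (ρ : Representation k (GL (Fin 2) (ZMod p)) V)

instance : DecidableEq (X p) := fun a b =>
  decidable_of_iff (slopeX a = slopeX b) ⟨fun h => slopeX_injective h, fun h => h ▸ rfl⟩

/-- the orbit map `gB ↦ ρ g v` for a `B₊`-invariant vector `v` -/
noncomputable def uvec (v : V) (hv : ∀ b ∈ Bplus p, ρ b v = v) : X p → V :=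
  Quotient.lift (fun g => ρ g v) (fun a b hab => by
    have hm : a⁻¹ * b ∈ Bplus p := QuotientGroup.leftRel_apply.mp hab
    calc ρ a v = ρ a (ρ (a⁻¹ * b) v) := by rw [hv _ hm]
      _ = ρ (a * (a⁻¹ * b)) v := by rw [← Module.End.mul_apply, ← _root_.map_mul]
      _ = ρ b v := by rw [mul_inv_cancel_left])

variable (v : V) (hv : ∀ b ∈ Bplus p, ρ b v = v)

lemma uvec_mk (g : GL (Fin 2) (ZMod p)) : uvec ρ v hv (QuotientGroup.mk g) = ρ g v := rfl

lemma uvec_smul (g : GL (Fin 2) (ZMod p)) (x : X p) :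
    uvec ρ v hv (g • x) = ρ g (uvec ρ v hv x) := by
  obtain ⟨a, rfl⟩ := QuotientGroup.mk_surjective x
  rw [smul_mk, uvec_mk, uvec_mk, _root_.map_mul]
  rfl

/-- the equivariant surjection from the permutation module on `X` -/
noncomputable def psi : (X p → k) →ₗ[k] V where
  toFun f := ∑ x : X p, f x • uvec ρ v hv x
  map_add' f g := by simp [add_smul, Finset.sum_add_distrib]
  map_smul' c f := by simp [Finset.smul_sum, smul_smul]

lemma psi_apply (f : X p → k) : psi ρ v hv f = ∑ x : X p, f x • uvec ρ v hv x := rfl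

lemma psi_equivariant (g : GL (Fin 2) (ZMod p)) (f : X p → k) :
    ρ g (psi ρ v hv f) = psi ρ v hv (fun x => f (g⁻¹ • x)) := by
  rw [psi_apply, psi_apply, _root_.map_sum]
  refine Fintype.sum_equiv (MulAction.toPerm g) _ _ ?_
  intro x
  rw [_root_.map_smul, ← uvec_smul]
  have : (MulAction.toPerm g) x = g • x := rfl
  rw [this, inv_smul_smul]

lemma psi_single : psi ρ v hv (Pi.single (QuotientGroup.mk 1 : X p) (1 : k)) = v := by
  rw [psi_apply]
  rw [Finset.sum_eq_single (QuotientGroup.mk 1 : X p)]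
  · rw [Pi.single_eq_same, one_smul, uvec_mk, _root_.map_one]
    rfl
  · intro b _ hb
    rw [Pi.single_eq_of_ne hb, zero_smul]
  · intro h
    exact absurd (Finset.mem_univ _) h

variable (hirr : IsSimpleModule (MonoidAlgebra k (GL (Fin 2) (ZMod p))) ρ.asModule)

include hirr hv

lemma psi_surjective (hv0 : v ≠ 0) : Function.Surjective ⇑(psi ρ v hv) := by
  have hst : ∀ g : GL (Fin 2) (ZMod p), ∀ w ∈ LinearMap.range (psi ρ v hv),
      ρ g w ∈ LinearMap.range (psi ρ v hv) := by
    rintro g w ⟨f, rfl⟩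
    exact ⟨fun x => f (g⁻¹ • x), (psi_equivariant ρ v hv g f).symm⟩
  rcases stable_eq_bot_or_top ρ hirr _ hst with h | h
  · exfalso
    have : v ∈ LinearMap.range (psi ρ v hv) := ⟨_, psi_single ρ v hv⟩
    rw [h] at this
    exact hv0 this
  · exact LinearMap.range_eq_top.mp h

lemma invariants_rho_bot (hdim : finrank k V = p) : Representation.invariants ρ = ⊥ := by
  refine invariants_eq_bot_of_irreducible ρ hirr ?_
  rw [hdim]
  exact (Fact.out : p.Prime).two_le

lemma ker_psi (hdim : finrank k V = p) (hv0 : v ≠ 0) :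
    LinearMap.ker (psi ρ v hv) = k ∙ (fun _ => (1 : k) : X p → k) := by
  have hconst : ((fun _ => (1 : k)) : X p → k) ∈ LinearMap.ker (psi ρ v hv) := by
    rw [LinearMap.mem_ker]
    have hs : psi ρ v hv (fun _ => (1 : k)) ∈ Representation.invariants ρ := by
      intro g
      rw [psi_equivariant]
    rw [invariants_rho_bot ρ v hv hirr hdim] at hs
    exact hs
  have hle : (k ∙ (fun _ => (1 : k) : X p → k)) ≤ LinearMap.ker (psi ρ v hv) :=
    (Submodule.span_singleton_le_iff_mem _ _).mpr hconst
  have h1 : finrank k (k ∙ (fun _ => (1 : k) : X p → k)) = 1 :=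
    finrank_span_singleton (fun h => one_ne_zero (congrFun h (QuotientGroup.mk 1 : X p)))
  have h2 : finrank k (LinearMap.ker (psi ρ v hv)) = 1 := by
    have hrn := LinearMap.finrank_range_add_finrank_ker (psi ρ v hv)
    rw [LinearMap.range_eq_top.mpr (psi_surjective ρ v hv hirr hv0), finrank_top,
      Module.finrank_fintype_fun_eq_card, card_X, hdim] at hrn
    omega
  exact (Submodule.eq_of_le_of_finrank_eq hle (by rw [h1, h2])).symm

/-- Main dimension count: invariants of a subgroup `H` acting on `X` with `n` orbits. -/
lemma finrank_invariants_core (H : Subgroup (GL (Fin 2) (ZMod p))) {n : ℕ}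
    (φ : X p → Fin n)
    (hinv : ∀ (h : H) (x : X p), φ ((h : GL (Fin 2) (ZMod p)) • x) = φ x)
    (hfull : ∀ x y : X p, φ x = φ y → ∃ h : H, (h : GL (Fin 2) (ZMod p)) • x = y)
    (hsurj : Function.Surjective φ)
    (hdim : finrank k V = p) (hv0 : v ≠ 0) :
    finrank k (Representation.invariants (ρ.comp H.subtype)) + 1 = n := by
  classical
  -- the submodule of H-invariant functions on X
  let Wsub : Submodule k (X p → k) :=
    { carrier := {f | ∀ (h : H) (x : X p), f ((h : GL (Fin 2) (ZMod p)) • x) = f x}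
      add_mem' := fun hf hg h x => by
        rw [Pi.add_apply, Pi.add_apply, hf h x, hg h x]
      zero_mem' := fun h x => rfl
      smul_mem' := fun c f hf h x => by
        rw [Pi.smul_apply, Pi.smul_apply, hf h x] }
  have hmem : ∀ f : X p → k, f ∈ Wsub ↔
      ∀ (h : H) (x : X p), f ((h : GL (Fin 2) (ZMod p)) • x) = f x := fun f => Iff.rfl
  -- the invariants are the image of Wsub
  have hmap : Submodule.map (psi ρ v hv) Wsub
      = Representation.invariants (ρ.comp H.subtype) := by
    apply le_antisymm
    · rintro w ⟨f, hf, rfl⟩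
      intro h
      show ρ (h : GL (Fin 2) (ZMod p)) (psi ρ v hv f) = psi ρ v hv f
      rw [psi_equivariant]
      congr 1
      funext x
      have := hf h⁻¹ x
      rw [Subgroup.coe_inv] at this
      exact this
    · intro w hw
      obtain ⟨f₀, hf₀⟩ := psi_surjective ρ v hv hirr hv0 w
      set F : X p → k := fun x => ∑ h : H, f₀ ((h : GL (Fin 2) (ZMod p)) • x) with hF
      have hFW : F ∈ Wsub := by
        intro h₀ x
        rw [hF]
        refine Fintype.sum_equiv (Equiv.mulRight h₀) _ _ ?_
        intro h
        simp only [Equiv.coe_mulRight]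
        rw [Subgroup.coe_mul, mul_smul]
      have hFpsi : psi ρ v hv F = (Fintype.card H) • w := by
        have hFsum : F = ∑ h : H, (fun x => f₀ ((h : GL (Fin 2) (ZMod p)) • x)) := by
          funext x
          rw [hF, Finset.sum_apply]
        rw [hFsum, _root_.map_sum]
        have hterm : ∀ h : H, psi ρ v hv (fun x => f₀ ((h : GL (Fin 2) (ZMod p)) • x)) = w := by
          intro h
          have := psi_equivariant ρ v hv ((h : GL (Fin 2) (ZMod p)))⁻¹ f₀
          rw [inv_inv] at this
          rw [← this, hf₀]
          have hw' := hw h⁻¹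
          have : ρ ((h : GL (Fin 2) (ZMod p)))⁻¹ w = w := by
            rw [← Subgroup.coe_inv]
            exact hw'
          exact this
        rw [Finset.sum_congr rfl (fun h _ => hterm h), Finset.sum_const, Finset.card_univ]
      refine ⟨(Fintype.card H : k)⁻¹ • F, Wsub.smul_mem _ hFW, ?_⟩
      rw [_root_.map_smul, hFpsi]
      have hc : (Fintype.card H : k) ≠ 0 := Nat.cast_ne_zero.mpr Fintype.card_ne_zero
      rw [← Nat.cast_smul_eq_nsmul k, smul_smul, inv_mul_cancel₀ hc, one_smul]
  -- Wsub is isomorphic to functions on the orbit set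
  have hWdim : finrank k Wsub = n := by
    let sec := Function.surjInv hsurj
    have hsec : ∀ i, φ (sec i) = i := fun i => Function.surjInv_eq hsurj i
    let e : Wsub ≃ₗ[k] (Fin n → k) :=
      { toFun := fun f i => (f : X p → k) (sec i)
        map_add' := fun f g => rfl
        map_smul' := fun c f => rfl
        invFun := fun c => ⟨fun x => c (φ x), fun h x => by show c (φ ((h : GL (Fin 2) (ZMod p)) • x)) = c (φ x); rw [hinv h x]⟩
        left_inv := by
          rintro ⟨f, hf⟩
          apply Subtype.ext
          funext x
          show f (sec (φ x)) = f x
          obtain ⟨h, hh⟩ := hfull (sec (φ x)) x (by rw [hsec])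
          calc f (sec (φ x)) = f ((h : GL (Fin 2) (ZMod p)) • sec (φ x)) := (hf h _).symm
            _ = f x := by rw [hh]
        right_inv := by
          intro c
          funext i
          show c (φ (sec i)) = c i
          rw [hsec] }
    rw [LinearEquiv.finrank_eq e, Module.finrank_fintype_fun_eq_card, Fintype.card_fin]
  -- rank-nullity on the restriction
  have hker : LinearMap.ker (psi ρ v hv) ≤ Wsub := by
    rw [ker_psi ρ v hv hirr hdim hv0]
    refine (Submodule.span_singleton_le_iff_mem _ _).mpr ?_
    intro h x
    rfl
  have hrn := LinearMap.finrank_range_add_finrank_ker ((psi ρ v hv).domRestrict Wsub)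
  rw [LinearMap.range_domRestrict, LinearMap.ker_domRestrict] at hrn
  have hkd : finrank k (Submodule.comap Wsub.subtype (LinearMap.ker (psi ρ v hv))) = 1 := by
    rw [LinearEquiv.finrank_eq (Submodule.comapSubtypeEquivOfLe hker),
      ker_psi ρ v hv hirr hdim hv0]
    exact finrank_span_singleton (fun h => one_ne_zero (congrFun h (QuotientGroup.mk 1 : X p)))
  rw [hmap, hkd] at hrn
  rw [← hWdim]
  exact hrn

end Main

end StAux

theorem stmt_11 (hp : Odd p)
    (V : Type) [AddCommGroup V] [Module (AlgebraicClosure ℚ) V]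
    [FiniteDimensional (AlgebraicClosure ℚ) V]
    (ρ : Representation (AlgebraicClosure ℚ) (GL (Fin 2) (ZMod p)) V)
    (hirr : IsSimpleModule
      (MonoidAlgebra (AlgebraicClosure ℚ) (GL (Fin 2) (ZMod p))) ρ.asModule)
    (hdim : finrank (AlgebraicClosure ℚ) V = p)
    (hB : Representation.invariants (ρ.comp (Bplus p).subtype) ≠ ⊥) :
    finrank (AlgebraicClosure ℚ)
        (Representation.invariants (ρ.comp (Tsplit p).subtype)) = 2 ∧
    finrank (AlgebraicClosure ℚ)
        (Representation.invariants (ρ.comp (Bplus p).subtype)) = 1 ∧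
    finrank (AlgebraicClosure ℚ)
        (Representation.invariants (ρ.comp (Bminus p).subtype)) = 1 ∧
    Representation.invariants (ρ.comp (Bplus p).subtype)
        ⊓ Representation.invariants (ρ.comp (Bminus p).subtype) = ⊥ ∧
    Representation.invariants (ρ.comp (Bplus p).subtype)
        ⊔ Representation.invariants (ρ.comp (Bminus p).subtype)
      = Representation.invariants (ρ.comp (Tsplit p).subtype) := by
  classical
  obtain ⟨v, hvmem, hv0⟩ := (Submodule.ne_bot_iff _).mp hB
  have hv : ∀ b ∈ Bplus p, ρ b v = v := fun b hb =>
    (Representation.mem_invariants _ v).mp hvmem ⟨b, hb⟩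
  have hT := StAux.finrank_invariants_core ρ v hv hirr (Tsplit p) StAux.phiT
    StAux.phiT_invariant StAux.phiT_full StAux.phiT_surjective hdim hv0
  have hBp2 := StAux.finrank_invariants_core ρ v hv hirr (Bplus p) StAux.phiBp
    StAux.phiBp_invariant StAux.phiBp_full StAux.phiBp_surjective hdim hv0
  have hBm2 := StAux.finrank_invariants_core ρ v hv hirr (Bminus p) StAux.phiBm
    StAux.phiBm_invariant StAux.phiBm_full StAux.phiBm_surjective hdim hv0
  have hInf : Representation.invariants (ρ.comp (Bplus p).subtype)
      ⊓ Representation.invariants (ρ.comp (Bminus p).subtype) = ⊥ := by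
    rw [Submodule.eq_bot_iff]
    intro w hw
    have hw1 : ∀ b ∈ Bplus p, ρ b w = w := fun b hb =>
      (Representation.mem_invariants _ w).mp (Submodule.mem_inf.mp hw).1 ⟨b, hb⟩
    have hw2 : ∀ b ∈ Bminus p, ρ b w = w := fun b hb =>
      (Representation.mem_invariants _ w).mp (Submodule.mem_inf.mp hw).2 ⟨b, hb⟩
    have hfix : w ∈ Representation.invariants ρ := by
      intro g
      have hg : g ∈ Subgroup.closure ((Bplus p : Set (GL (Fin 2) (ZMod p)))
          ∪ (Bminus p : Set (GL (Fin 2) (ZMod p)))) := by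
        rw [Subgroup.closure_union, Subgroup.closure_eq, Subgroup.closure_eq,
          StAux.sup_borels]
        trivial
      refine Subgroup.closure_induction ?_ ?_ ?_ ?_ hg
      · rintro x (hx | hx)
        · exact hw1 x hx
        · exact hw2 x hx
      · rw [_root_.map_one, Module.End.one_apply]
      · intro x y _ _ hpx hpy
        rw [_root_.map_mul, Module.End.mul_apply, hpy, hpx]
      · intro x _ hpx
        calc ρ x⁻¹ w = ρ x⁻¹ (ρ x w) := by rw [hpx]
          _ = w := by
            rw [← Module.End.mul_apply, ← _root_.map_mul, inv_mul_cancel,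
              _root_.map_one, Module.End.one_apply]
    rw [StAux.invariants_rho_bot ρ v hv hirr hdim] at hfix
    exact hfix
  have le1 : Representation.invariants (ρ.comp (Bplus p).subtype)
      ≤ Representation.invariants (ρ.comp (Tsplit p).subtype) := by
    intro w hw
    intro t
    exact (Representation.mem_invariants _ w).mp hw ⟨t.1, (Subgroup.mem_inf.mp t.2).1⟩
  have le2 : Representation.invariants (ρ.comp (Bminus p).subtype)
      ≤ Representation.invariants (ρ.comp (Tsplit p).subtype) := by
    intro w hw
    intro t
    exact (Representation.mem_invariants _ w).mp hw ⟨t.1, (Subgroup.mem_inf.mp t.2).2⟩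
  have hSup : Representation.invariants (ρ.comp (Bplus p).subtype)
        ⊔ Representation.invariants (ρ.comp (Bminus p).subtype)
      = Representation.invariants (ρ.comp (Tsplit p).subtype) := by
    have hdims := Submodule.finrank_sup_add_finrank_inf_eq
      (Representation.invariants (ρ.comp (Bplus p).subtype))
      (Representation.invariants (ρ.comp (Bminus p).subtype))
    rw [hInf, finrank_bot] at hdims
    exact Submodule.eq_of_le_of_finrank_eq (sup_le le1 le2) (by omega)
  exact ⟨by omega, by omega, by omega, hInf, hSup⟩
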